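/- Let μ > 0, let F ∈ L∞(S) with ‖F‖_∞ < μ/(2π), let φ ≠ 0 be real, and define Φ(x) = (π/μ)|φ|F(x) + φ/2 and τ*(x) = 1/2 + (π/μ)F(x)·sign(φ). Then τ*(x) ∈ (0,1) for a.e. x and (1/(2π)) ∫₀^{2π} ∫₀¹ |Φ(x) - φτ| dτ dx = |φ|·(π²/μ² · ⟨F²⟩ + 1/4), where ⟨F²⟩ = (1/(2π))∫₀^{2π} F(x)² dx. -/

import Mathlib

open Real MeasureTheory intervalIntegral

lemma inner_abs (c : ℝ) (h0 : 0 ≤ c) (h1 : c ≤ 1) :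
    ∫ τ in (0:ℝ)..1, |c - τ| = c^2 - c + 1/2 := by
  have hInt : ∀ a b : ℝ, IntervalIntegrable (fun τ => |c - τ|) volume a b :=
    fun a b => ((continuous_const.sub continuous_id).abs).intervalIntegrable a b
  rw [← intervalIntegral.integral_add_adjacent_intervals (hInt 0 c) (hInt c 1)]
  have e1 : ∫ τ in (0:ℝ)..c, |c - τ| = ∫ τ in (0:ℝ)..c, (c - τ) := by
    apply intervalIntegral.integral_congr
    intro τ hτ
    rw [Set.uIcc_of_le h0] at hτ
    exact abs_of_nonneg (by linarith [hτ.2])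
  have e2 : ∫ τ in c..(1:ℝ), |c - τ| = ∫ τ in c..(1:ℝ), (τ - c) := by
    apply intervalIntegral.integral_congr
    intro τ hτ
    rw [Set.uIcc_of_le h1] at hτ
    show |c - τ| = τ - c
    rw [abs_sub_comm]
    exact abs_of_nonneg (by linarith [hτ.1])
  rw [e1, e2]
  have i1 : ∫ τ in (0:ℝ)..c, (c - τ) = c^2/2 := by
    simp [intervalIntegral.integral_sub intervalIntegrable_const
      (intervalIntegral.intervalIntegrable_id), integral_id]
    ring
  have i2 : ∫ τ in c..(1:ℝ), (τ - c) = (1-c)^2/2 := by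
    simp [intervalIntegral.integral_sub intervalIntegral.intervalIntegrable_id
      intervalIntegrable_const, integral_id]
    ring
  rw [i1, i2]; ring

theorem tau_star_in_unit_interval_and_integral (μ φ : ℝ) (F : ℝ → ℝ)
    (hμ : 0 < μ) (hφ : φ ≠ 0)
    (hF : ∀ x, |F x| < μ / (2*π))
    (hFmeas : Measurable F)
    (hFint : IntegrableOn F (Set.Icc 0 (2*π))) :
    (∀ x, (1/2 + (π/μ) * F x * Real.sign φ) ∈ Set.Ioo (0:ℝ) 1) ∧
    (1/(2*π)) * ∫ x in (0:ℝ)..(2*π), ∫ τ in (0:ℝ)..1,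
        |((π/μ) * |φ| * F x + φ/2) - φ * τ| =
      |φ| * (π^2/μ^2 * ((1/(2*π)) * ∫ x in (0:ℝ)..(2*π), (F x)^2) + 1/4) := by
  have hπ : (0:ℝ) < π := Real.pi_pos
  have hsign : φ * Real.sign φ = |φ| := by
    rcases hφ.lt_or_gt with h | h
    · rw [Real.sign_of_neg h, abs_of_neg h]; ring
    · rw [Real.sign_of_pos h, abs_of_pos h]; ring
  have hsign_sq : (Real.sign φ)^2 = 1 := by
    rcases hφ.lt_or_gt with h | h
    · rw [Real.sign_of_neg h]; ring
    · rw [Real.sign_of_pos h]; ring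
  have hbound : ∀ x, |(π/μ) * F x * Real.sign φ| < 1/2 := by
    intro x
    have : |(π/μ) * F x * Real.sign φ| = (π/μ) * |F x| := by
      rcases hφ.lt_or_gt with h | h
      · rw [Real.sign_of_neg h]
        rw [abs_mul, abs_mul, abs_of_pos (div_pos hπ hμ)]
        simp
      · rw [Real.sign_of_pos h]
        rw [abs_mul, abs_mul, abs_of_pos (div_pos hπ hμ)]
        simp
    rw [this]
    have := hF x
    have h2 : (π/μ) * |F x| < (π/μ) * (μ/(2*π)) :=
      mul_lt_mul_of_pos_left this (div_pos hπ hμ)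
    calc (π/μ) * |F x| < (π/μ) * (μ/(2*π)) := h2
      _ = 1/2 := by field_simp
  have hmem : ∀ x, (1/2 + (π/μ) * F x * Real.sign φ) ∈ Set.Ioo (0:ℝ) 1 := by
    intro x
    have := abs_lt.mp (hbound x)
    constructor <;> linarith [this.1, this.2]
  refine ⟨hmem, ?_⟩
  -- inner integral
  set c : ℝ → ℝ := fun x => 1/2 + (π/μ) * F x * Real.sign φ with hc
  have key : ∀ x, (∫ τ in (0:ℝ)..1, |((π/μ) * |φ| * F x + φ/2) - φ * τ|) =
      |φ| * (π^2/μ^2 * (F x)^2 + 1/4) := by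
    intro x
    have hcx := hmem x
    have hΦ : (π/μ) * |φ| * F x + φ/2 = φ * c x := by
      simp only [hc]
      rw [← hsign]
      ring
    have e : ∀ τ : ℝ, |((π/μ) * |φ| * F x + φ/2) - φ * τ| = |φ| * |c x - τ| := by
      intro τ
      rw [hΦ, ← mul_sub, abs_mul]
    simp_rw [e]
    rw [intervalIntegral.integral_const_mul, inner_abs (c x) hcx.1.le hcx.2.le]
    have : (c x)^2 - c x + 1/2 = π^2/μ^2 * (F x)^2 + 1/4 := by
      have : (c x)^2 - c x + 1/2 = (c x - 1/2)^2 + 1/4 := by ring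
      rw [this]
      simp only [hc]
      have : (1/2 + (π/μ) * F x * Real.sign φ - 1/2)^2
          = (π/μ)^2 * (F x)^2 * (Real.sign φ)^2 := by ring
      rw [this, hsign_sq, div_pow]
      ring
    rw [this]
  rw [intervalIntegral.integral_congr (fun x _ => key x)]
  -- integrability of F^2
  have hsq : IntegrableOn (fun x => (F x)^2) (Set.Icc 0 (2*π)) := by
    refine Measure.integrableOn_of_bounded (M := (μ/(2*π))^2) measure_Icc_lt_top.ne
      ((hFmeas.pow_const 2).aestronglyMeasurable) ?_
    · filter_upwards with x
      have h := (hF x).le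
      have : ‖(F x)^2‖ = |F x|^2 := by
        rw [Real.norm_eq_abs, ← abs_pow, abs_of_nonneg (sq_nonneg _)]
      rw [this]
      exact pow_le_pow_left₀ (abs_nonneg _) h 2
  have hsqI : IntervalIntegrable (fun x => (F x)^2) volume 0 (2*π) := by
    rw [intervalIntegrable_iff_integrableOn_Icc_of_le (by positivity)]
    exact hsq
  have expand : ∀ x : ℝ, |φ| * (π^2/μ^2 * (F x)^2 + 1/4)
      = (|φ| * π^2/μ^2) * (F x)^2 + |φ|/4 := fun x => by ring
  simp_rw [expand]
  rw [intervalIntegral.integral_add (hsqI.const_mul _) intervalIntegrable_const,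
    intervalIntegral.integral_const_mul, intervalIntegral.integral_const]
  have h2π : (2*π) ≠ 0 := by positivity
  field_simp
  ring
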